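/- Let n be an integer with n ≥ 3 and, for 1 < r < n, let ω_{r:n} denote the unique fixed point in (0,1) of the module h_{r:n}. Then the fixed points are strictly increasing in r: ω_{r:n} < ω_{s:n} whenever 1 < r < s < n; and they satisfy the symmetry relation ω_{r:n} + ω_{n−r+1:n} = 1 for every 1 < r < n. -/

import Mathlib

/-- The module of the `r`-th order statistic of `n` variables:
`h_{r:n}(t) = Σ_{j=r}^n C(n,j) t^j (1−t)^{n−j}`. -/
noncomputable def orderModule (n r : ℕ) (t : ℝ) : ℝ :=
  ∑ j ∈ Finset.Icc r n, (n.choose j : ℝ) * t ^ j * (1 - t) ^ (n - j)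

lemma tele (G : ℕ → ℝ) : ∀ n r : ℕ, r ≤ n + 1 →
    ∑ j ∈ Finset.Icc r n, (G j - G (j+1)) = G r - G (n+1) := by
  intro n
  induction n with
  | zero => intro r hr; interval_cases r <;> simp
  | succ n ih =>
    intro r hr
    rcases Nat.lt_or_ge (n+1) r with h | h
    · have : r = n + 2 := by omega
      subst this
      simp
    · rw [Finset.sum_Icc_succ_top h, ih r h]
      ring

noncomputable def termD (n j : ℕ) (t : ℝ) : ℝ :=
  (n : ℝ) * ((n-1).choose (j-1) : ℝ) * t ^ (j-1) * (1 - t) ^ (n - j)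

lemma hasDerivAt_term (n j : ℕ) (hj1 : 1 ≤ j) (hjn : j ≤ n) (t : ℝ) :
    HasDerivAt (fun t : ℝ => (n.choose j : ℝ) * t ^ j * (1 - t) ^ (n - j))
      (termD n j t - termD n (j+1) t) t := by
  have A : HasDerivAt (fun t : ℝ => t ^ j) ((j : ℝ) * t ^ (j - 1)) t := hasDerivAt_pow j t
  have B : HasDerivAt (fun t : ℝ => (1 - t) ^ (n - j))
      (((n - j : ℕ) : ℝ) * (1 - t) ^ (n - j - 1) * (-1)) t :=
    (((hasDerivAt_id t).const_sub 1).pow (n - j))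
  have C := (A.fun_mul B).const_mul ((n.choose j : ℝ))
  simp only [← mul_assoc] at C
  have hval : (↑(n.choose j) : ℝ) *
        ((j:ℝ) * t ^ (j - 1) * (1 - t) ^ (n - j) +
          t ^ j * ((n - j : ℕ):ℝ) * (1 - t) ^ (n - j - 1) * (-1))
      = termD n j t - termD n (j+1) t := by
    obtain ⟨k, rfl⟩ : ∃ k, j = k + 1 := ⟨j - 1, by omega⟩
    rcases Nat.lt_or_ge (k+1) n with h | h
    · obtain ⟨m, rfl⟩ : ∃ m, n = k + m + 2 := ⟨n - k - 2, by omega⟩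
      have e1 : k + m + 2 - (k + 1) = m + 1 := by omega
      have e2 : k + m + 2 - (k + 1 + 1) = m := by omega
      have e3 : k + m + 2 - 1 = k + m + 1 := by omega
      have e4 : k + 1 - 1 = k := by omega
      have e5 : k + 1 + 1 - 1 = k + 1 := by omega
      have e6 : m + 1 - 1 = m := by omega
      have h1 : (k+m+2) * (k + m + 1).choose k = (k+m+2).choose (k+1) * (k+1) := by
        have h := Nat.add_one_mul_choose_eq (k + m + 1) k
        simpa [Nat.succ_eq_add_one] using h
      have h2 : (k+m+2).choose (k+1) * (m+1) = (k+m+2) * (k + m + 1).choose (k+1) := by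
        have s1 : (k+m+2).choose (k+1) = (k+m+2).choose (m+1) := by
          rw [← Nat.choose_symm (by omega : m+1 ≤ k+m+2)]
          congr 1
          omega
        have s2 : (k+m+1).choose (k+1) = (k+m+1).choose m := by
          rw [← Nat.choose_symm (by omega : m ≤ k+m+1)]
          congr 1
          omega
        have h2' : (k+m+2) * (k + m + 1).choose m = (k+m+2).choose (m+1) * (m+1) := by
          have h := Nat.add_one_mul_choose_eq (k + m + 1) m
          simpa [Nat.succ_eq_add_one] using h
        rw [s1, s2]
        exact h2'.symm
      have h1R : ((k:ℝ)+(m:ℝ)+2) * ((k + m + 1).choose k : ℝ)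
          = ((k+m+2).choose (k+1) : ℝ) * ((k:ℝ)+1) := by exact_mod_cast h1
      have h2R : (((k+m+2).choose (k+1) : ℕ) : ℝ) * ((m:ℝ)+1)
          = ((k:ℝ)+(m:ℝ)+2) * ((k + m + 1).choose (k+1) : ℝ) := by exact_mod_cast h2
      simp only [termD, e1, e2, e3, e4, e5, e6]
      push_cast
      linear_combination (-(t ^ k * (1 - t) ^ (m+1))) * h1R - (t ^ (k+1) * (1 - t) ^ m) * h2R
    · have hjn' : n = k + 1 := by omega
      subst hjn'
      simp only [termD]
      have e1 : k + 1 - (k+1) = 0 := by omega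
      have e2 : k + 1 - (k + 1 + 1) = 0 := by omega
      have e3 : k + 1 - 1 = k := by omega
      have e4 : k + 1 + 1 - 1 = k + 1 := by omega
      simp only [e1, e2, e3, e4, Nat.choose_self, Nat.choose_succ_self, pow_zero]
      push_cast
      ring
  exact hval ▸ C

lemma hasDerivAt_orderModule (n r : ℕ) (h1 : 1 ≤ r) (h2 : r ≤ n) (t : ℝ) :
    HasDerivAt (orderModule n r) (termD n r t) t := by
  have H : HasDerivAt (fun t : ℝ => ∑ j ∈ Finset.Icc r n, (n.choose j : ℝ) * t ^ j * (1 - t) ^ (n - j))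
      (∑ j ∈ Finset.Icc r n, (termD n j t - termD n (j+1) t)) t := by
    apply HasDerivAt.fun_sum
    intro j hj
    simp only [Finset.mem_Icc] at hj
    exact hasDerivAt_term n j (le_trans h1 hj.1) hj.2 t
  rw [tele (fun j => termD n j t) n r (by omega)] at H
  have hz : termD n (n+1) t = 0 := by
    have hc : ((n-1).choose n) = 0 := Nat.choose_eq_zero_of_lt (by omega)
    simp [termD, hc]
  rw [hz, sub_zero] at H
  exact H

lemma continuous_orderModule (n r : ℕ) : Continuous (orderModule n r) := by
  unfold orderModule
  fun_prop

lemma orderModule_zero (n r : ℕ) (h1 : 1 ≤ r) : orderModule n r 0 = 0 := by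
  unfold orderModule
  apply Finset.sum_eq_zero
  intro j hj
  simp only [Finset.mem_Icc] at hj
  rw [zero_pow (by omega : j ≠ 0)]
  ring

lemma orderModule_one (n r : ℕ) (h2 : r ≤ n) : orderModule n r 1 = 1 := by
  unfold orderModule
  rw [Finset.sum_eq_single n]
  · simp
  · intro j hj hne
    simp only [Finset.mem_Icc] at hj
    rw [sub_self, zero_pow (by omega : n - j ≠ 0)]
    ring
  · intro h
    exact absurd (Finset.mem_Icc.2 ⟨h2, le_refl n⟩) h

lemma orderModule_strict_anti (n r s : ℕ) (hrs : r < s) (hsn : s ≤ n) {t : ℝ}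
    (ht : t ∈ Set.Ioo (0:ℝ) 1) : orderModule n s t < orderModule n r t := by
  unfold orderModule
  apply Finset.sum_lt_sum_of_subset (Finset.Icc_subset_Icc_left hrs.le)
    (i := r) (Finset.mem_Icc.2 ⟨le_refl r, by omega⟩) (by simp [Finset.mem_Icc]; omega)
  · have hc : 0 < (n.choose r : ℝ) := by exact_mod_cast Nat.choose_pos (by omega : r ≤ n)
    have h1 : (0:ℝ) < t := ht.1
    have h2 : (0:ℝ) < 1 - t := by linarith [ht.2]
    positivity
  · intro j _ _
    have h1 : (0:ℝ) < t := ht.1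
    have h2 : (0:ℝ) < 1 - t := by linarith [ht.2]
    positivity

open Set in
lemma fixedPoint_sign (n r : ℕ) (h1 : 1 < r) (h2 : r < n) {w : ℝ}
    (hw : w ∈ Set.Ioo (0:ℝ) 1) (hfix : orderModule n r w = w) :
    ∀ t ∈ Set.Ioo (0:ℝ) 1, (t < w → orderModule n r t < t) ∧ (w < t → t < orderModule n r t) := by
  obtain ⟨a, rfl⟩ : ∃ a, r = a + 2 := ⟨r - 2, by omega⟩
  obtain ⟨b, rfl⟩ : ∃ b, n = a + b + 3 := ⟨n - a - 3, by omega⟩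
  set c : ℝ := ((a+b+3 : ℕ) : ℝ) * (((a+b+2).choose (a+1) : ℕ) : ℝ) with hcdef
  have hc : 0 < c := by
    apply mul_pos
    · positivity
    · exact_mod_cast Nat.choose_pos (by omega : a + 1 ≤ a + b + 2)
  set ψ : ℝ → ℝ := fun t => c * t ^ (a+1) * (1-t) ^ (b+1) with hψdef
  have hψd : ∀ t : ℝ, termD (a+b+3) (a+2) t = ψ t := by
    intro t
    have e1 : a + b + 3 - 1 = a + b + 2 := by omega
    have e2 : a + 2 - 1 = a + 1 := by omega
    have e3 : a + b + 3 - (a + 2) = b + 1 := by omega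
    simp only [termD, e1, e2, e3, hψdef, hcdef]
  have hD : ∀ t : ℝ, HasDerivAt (orderModule (a+b+3) (a+2)) (ψ t) t := fun t =>
    hψd t ▸ hasDerivAt_orderModule (a+b+3) (a+2) (by omega) (by omega) t
  set φ : ℝ → ℝ := fun t => orderModule (a+b+3) (a+2) t - t with hφdef
  have hφD : ∀ t : ℝ, HasDerivAt φ (ψ t - 1) t := fun t => (hD t).sub (hasDerivAt_id t)
  have contφ : Continuous φ := (continuous_orderModule _ _).sub continuous_id
  have contψ : Continuous ψ := by fun_prop
  have φ0 : φ 0 = 0 := by simp [hφdef, orderModule_zero _ _ (by omega : 1 ≤ a + 2)]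
  have φ1 : φ 1 = 0 := by simp [hφdef, orderModule_one _ _ (by omega : a + 2 ≤ a + b + 3)]
  have ψ0 : ψ 0 = 0 := by simp [hψdef]
  have ψ1 : ψ 1 = 0 := by simp [hψdef]
  set m : ℝ := ((a:ℝ)+1)/((a:ℝ)+(b:ℝ)+2) with hmdef
  have hden : (0:ℝ) < (a:ℝ)+(b:ℝ)+2 := by positivity
  have hm0 : 0 < m := by positivity
  have hm1 : m < 1 := by
    rw [hmdef, div_lt_one hden]
    linarith
  -- derivative of ψ
  have hψD : ∀ t : ℝ, HasDerivAt ψ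
      (c * t ^ a * (1-t) ^ b * (((a:ℝ)+1) - ((a:ℝ)+(b:ℝ)+2)*t)) t := by
    intro t
    have A : HasDerivAt (fun t : ℝ => t ^ (a+1)) (((a:ℝ)+1) * t ^ a) t := by
      simpa using hasDerivAt_pow (a+1) t
    have B : HasDerivAt (fun t : ℝ => (1 - t) ^ (b+1))
        (((b:ℝ)+1) * (1 - t) ^ b * (-1)) t := by
      simpa using ((hasDerivAt_id t).const_sub 1).fun_pow (b+1)
    have C := (A.fun_mul B).const_mul c
    simp only [← mul_assoc] at C
    have hval : c * (((a:ℝ)+1) * t ^ a * (1 - t) ^ (b+1) + t ^ (a+1) * (((b:ℝ)+1) * (1 - t) ^ b * (-1)))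
        = c * t ^ a * (1-t) ^ b * (((a:ℝ)+1) - ((a:ℝ)+(b:ℝ)+2)*t) := by ring
    refine C.congr_deriv ?_
    rw [← hval]
    ring
  have monoψ : StrictMonoOn ψ (Icc 0 m) := by
    apply strictMonoOn_of_deriv_pos (convex_Icc _ _) contψ.continuousOn
    intro x hx
    rw [interior_Icc] at hx
    rw [(hψD x).deriv]
    have hx1 : x < 1 := lt_trans hx.2 hm1
    have hfac : 0 < ((a:ℝ)+1) - ((a:ℝ)+(b:ℝ)+2)*x := by
      have := (lt_div_iff₀ hden).1 hx.2
      linarith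
    have h0 : (0:ℝ) < x := hx.1
    have h1 : (0:ℝ) < 1 - x := by linarith
    positivity
  have antiψ : StrictAntiOn ψ (Icc m 1) := by
    apply strictAntiOn_of_deriv_neg (convex_Icc _ _) contψ.continuousOn
    intro x hx
    rw [interior_Icc] at hx
    rw [(hψD x).deriv]
    have hx0 : 0 < x := lt_trans hm0 hx.1
    have hfac : ((a:ℝ)+1) - ((a:ℝ)+(b:ℝ)+2)*x < 0 := by
      have := (div_lt_iff₀ hden).1 hx.1
      linarith
    have h1 : (0:ℝ) < 1 - x := by linarith [hx.2]
    have : 0 < c * x ^ a * (1-x) ^ b := by positivity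
    nlinarith
  -- helper for φ monotonicity
  have antiφ : ∀ p q : ℝ, (∀ x ∈ Ioo p q, ψ x < 1) → StrictAntiOn φ (Icc p q) := by
    intro p q hpq
    apply strictAntiOn_of_deriv_neg (convex_Icc _ _) contφ.continuousOn
    intro x hx
    rw [interior_Icc] at hx
    rw [(hφD x).deriv]
    linarith [hpq x hx]
  have monoφ : ∀ p q : ℝ, (∀ x ∈ Ioo p q, 1 < ψ x) → StrictMonoOn φ (Icc p q) := by
    intro p q hpq
    apply strictMonoOn_of_deriv_pos (convex_Icc _ _) contφ.continuousOn
    intro x hx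
    rw [interior_Icc] at hx
    rw [(hφD x).deriv]
    linarith [hpq x hx]
  -- ψ m > 1
  have hψm : 1 < ψ m := by
    by_contra hle
    push_neg at hle
    have A1 : StrictAntiOn φ (Icc 0 m) := by
      apply antiφ
      intro x hx
      have := monoψ ⟨hx.1.le, hx.2.le⟩ ⟨hm0.le, le_refl m⟩ hx.2
      linarith
    have A2 : StrictAntiOn φ (Icc m 1) := by
      apply antiφ
      intro x hx
      have := antiψ ⟨le_refl m, hm1.le⟩ ⟨hx.1.le, hx.2.le⟩ hx.1
      linarith
    have v1 : φ m < φ 0 := A1 ⟨le_refl 0, hm0.le⟩ ⟨hm0.le, le_refl m⟩ hm0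
    have v2 : φ 1 < φ m := A2 ⟨le_refl m, hm1.le⟩ ⟨hm1.le, le_refl 1⟩ hm1
    rw [φ0] at v1; rw [φ1] at v2
    linarith
  -- IVT for t1 t2
  obtain ⟨t1, ht1, hψt1⟩ : ∃ t1 ∈ Ioo (0:ℝ) m, ψ t1 = 1 := by
    have := intermediate_value_Ioo hm0.le contψ.continuousOn (a := 0) (b := m)
      (show (1:ℝ) ∈ Ioo (ψ 0) (ψ m) by rw [ψ0]; exact ⟨one_pos, hψm⟩)
    obtain ⟨x, hx, hxe⟩ := this
    exact ⟨x, hx, hxe⟩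
  obtain ⟨t2, ht2, hψt2⟩ : ∃ t2 ∈ Ioo m (1:ℝ), ψ t2 = 1 := by
    have := intermediate_value_Ioo' hm1.le contψ.continuousOn (a := m) (b := 1)
      (show (1:ℝ) ∈ Ioo (ψ 1) (ψ m) by rw [ψ1]; exact ⟨one_pos, hψm⟩)
    obtain ⟨x, hx, hxe⟩ := this
    exact ⟨x, hx, hxe⟩
  have ht12 : t1 < t2 := lt_trans ht1.2 ht2.1
  -- the three monotonicity regions for φ
  have A1 : StrictAntiOn φ (Icc 0 t1) := by
    apply antiφ
    intro x hx
    have := monoψ ⟨hx.1.le, (lt_trans hx.2 ht1.2).le⟩ ⟨ht1.1.le, ht1.2.le⟩ hx.2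
    rw [hψt1] at this
    exact this
  have M : StrictMonoOn φ (Icc t1 t2) := by
    apply monoφ
    intro x hx
    rcases le_or_gt x m with hxm | hxm
    · have := monoψ ⟨ht1.1.le, ht1.2.le⟩ ⟨(lt_trans ht1.1 hx.1).le, hxm⟩ hx.1
      rw [hψt1] at this
      exact this
    · have := antiψ ⟨hxm.le, (lt_trans hx.2 ht2.2).le⟩ ⟨ht2.1.le, ht2.2.le⟩ hx.2
      rw [hψt2] at this
      exact this
  have A2 : StrictAntiOn φ (Icc t2 1) := by
    apply antiφ
    intro x hx
    have := antiψ ⟨ht2.1.le, ht2.2.le⟩ ⟨(lt_trans ht2.1 hx.1).le, hx.2.le⟩ hx.1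
    rw [hψt2] at this
    exact this
  have negL : ∀ t : ℝ, 0 < t → t ≤ t1 → φ t < 0 := by
    intro t h0 hle
    have := A1 ⟨le_refl 0, (h0.trans_le hle).le.trans (le_refl t1)⟩ ⟨h0.le, hle⟩ h0
    rw [φ0] at this
    exact this
  have posR : ∀ t : ℝ, t2 ≤ t → t < 1 → 0 < φ t := by
    intro t hge hlt
    have := A2 ⟨hge, hlt.le⟩ ⟨ht2.2.le, le_refl 1⟩ hlt
    rw [φ1] at this
    exact this
  have hφw : φ w = 0 := by simp [hφdef, hfix]
  have hwt1 : t1 < w := by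
    by_contra hcon
    push_neg at hcon
    have := negL w hw.1 hcon
    rw [hφw] at this
    exact lt_irrefl 0 this
  have hwt2 : w < t2 := by
    by_contra hcon
    push_neg at hcon
    have := posR w hcon hw.2
    rw [hφw] at this
    exact lt_irrefl 0 this
  intro t ht
  constructor
  · intro hlt
    have hφt : φ t < 0 := by
      rcases le_or_gt t t1 with hle | hgt
      · exact negL t ht.1 hle
      · have := M ⟨hgt.le, (hlt.trans hwt2).le⟩ ⟨hwt1.le, hwt2.le⟩ hlt
        rw [hφw] at this
        exact this
    simpa [hφdef, sub_neg] using hφt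
  · intro hgt
    have hφt : 0 < φ t := by
      rcases le_or_gt t2 t with hle | hlt2
      · exact posR t hle ht.2
      · have := M ⟨hwt1.le, hwt2.le⟩ ⟨(hwt1.trans hgt).le, hlt2.le⟩ hgt
        rw [hφw] at this
        exact this
    simpa [hφdef, sub_pos] using hφt

lemma orderModule_reflect (n r : ℕ) (h1 : 1 ≤ r) (h2 : r ≤ n) (t : ℝ) :
    orderModule n (n - r + 1) (1 - t) = 1 - orderModule n r t := by
  have key : orderModule n (n - r + 1) (1 - t)
      = ∑ k ∈ Finset.Icc 0 (r-1), (n.choose k : ℝ) * t ^ k * (1 - t) ^ (n - k) := by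
    unfold orderModule
    rw [Finset.sum_nbij' (i := fun j => n - j) (j := fun k => n - k)]
    · intro j hj
      simp only [Finset.mem_Icc] at hj ⊢
      omega
    · intro k hk
      simp only [Finset.mem_Icc] at hk ⊢
      omega
    · intro j hj
      simp only [Finset.mem_Icc] at hj
      omega
    · intro k hk
      simp only [Finset.mem_Icc] at hk
      omega
    · intro j hj
      simp only [Finset.mem_Icc] at hj
      have e1 : n - (n - j) = j := by omega
      have e2 : n.choose (n - j) = n.choose j := Nat.choose_symm (by omega)
      rw [e1, e2, sub_sub_cancel]
      ring
  have split : (∑ k ∈ Finset.Icc 0 (r-1), (n.choose k : ℝ) * t ^ k * (1 - t) ^ (n - k))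
      + orderModule n r t = ∑ k ∈ Finset.range (n+1), (n.choose k : ℝ) * t ^ k * (1 - t) ^ (n - k) := by
    unfold orderModule
    rw [show Finset.Icc 0 (r-1) = Finset.Ico 0 r by rw [← Finset.Ico_add_one_right_eq_Icc]; congr 1; omega,
        show Finset.Icc r n = Finset.Ico r (n+1) by rw [Finset.Ico_add_one_right_eq_Icc],
        show Finset.range (n+1) = Finset.Ico 0 (n+1) by rw [Nat.Ico_zero_eq_range]]
    exact Finset.sum_Ico_consecutive _ (by omega) (by omega)
  have total : ∑ k ∈ Finset.range (n+1), (n.choose k : ℝ) * t ^ k * (1 - t) ^ (n - k) = 1 := by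
    calc ∑ k ∈ Finset.range (n+1), (n.choose k : ℝ) * t ^ k * (1 - t) ^ (n - k)
        = ∑ k ∈ Finset.range (n+1), t ^ k * (1 - t) ^ (n - k) * (n.choose k : ℝ) := by
          apply Finset.sum_congr rfl
          intro k _
          ring
      _ = (t + (1 - t)) ^ n := (add_pow t (1-t) n).symm
      _ = 1 := by norm_num
  rw [key]
  linarith [split, total]

/-- The fixed points `ω_{r:n} ∈ (0,1)` of the modules of order statistics are strictly
increasing in `r` and satisfy `ω_{r:n} + ω_{n−r+1:n} = 1`. -/
theorem orderModule_fixed_points_increasing_and_symmetric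
    (n : ℕ) (hn : 3 ≤ n) (ω : ℕ → ℝ)
    (hω : ∀ r : ℕ, 1 < r → r < n →
      ω r ∈ Set.Ioo (0 : ℝ) 1 ∧ orderModule n r (ω r) = ω r) :
    (∀ r s : ℕ, 1 < r → r < s → s < n → ω r < ω s) ∧
    (∀ r : ℕ, 1 < r → r < n → ω r + ω (n - r + 1) = 1) := by
  constructor
  · intro r s hr hrs hsn
    obtain ⟨hrI, hrF⟩ := hω r hr (lt_trans hrs hsn)
    obtain ⟨hsI, hsF⟩ := hω s (lt_trans hr hrs) hsn
    have key := fixedPoint_sign n s (lt_trans hr hrs) hsn hsI hsF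
    have hlt : orderModule n s (ω r) < ω r := by
      calc orderModule n s (ω r) < orderModule n r (ω r) :=
            orderModule_strict_anti n r s hrs hsn.le hrI
        _ = ω r := hrF
    by_contra hcon
    push_neg at hcon
    rcases eq_or_lt_of_le hcon with heq | hlt2
    · rw [heq] at hsF
      linarith [hsF, hlt]
    · have := (key (ω r) hrI).2 hlt2
      linarith
  · intro r hr hrn
    obtain ⟨hrI, hrF⟩ := hω r hr hrn
    have hr'1 : 1 < n - r + 1 := by omega
    have hr'n : n - r + 1 < n := by omega
    obtain ⟨hI, hF⟩ := hω (n - r + 1) hr'1 hr'n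
    have hfix2 : orderModule n (n - r + 1) (1 - ω r) = 1 - ω r := by
      rw [orderModule_reflect n r (by omega) (by omega), hrF]
    have hmem : (1 - ω r) ∈ Set.Ioo (0:ℝ) 1 := ⟨by linarith [hrI.2], by linarith [hrI.1]⟩
    have key := fixedPoint_sign n (n - r + 1) hr'1 hr'n hI hF (1 - ω r) hmem
    rcases lt_trichotomy (1 - ω r) (ω (n - r + 1)) with h | h | h
    · have := key.1 h
      linarith
    · linarith
    · have := key.2 h
      linarith
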